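/- Periodic extension generates higher eigenfunctions: let 1 < p, q < ∞, let (f₁, λ₁) solve (⌊f''⌉^{p-1})'' = λ⌊f⌉^{q-1} on [0,1] with Navier boundary conditions, f₁ > 0 on (0,1), ‖f₁''‖_{L^p(0,1)} = 1, and let f₁* be the 2-periodic odd extension of f₁ to ℝ. Then for each n ≥ 1, the pair (fₙ(t) = f₁*(nt)/n², λₙ = n^{2q}·λ₁) solves the same equation on [0,1] with Navier boundary conditions and ‖fₙ''‖_{L^p(0,1)} = 1, and fₙ has exactly n-1 zeros in (0,1). -/

import Mathlib

open Set Filter Topology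




/-- Signed power ⌊x⌉^r = |x|^r · sgn x. -/
noncomputable def spow (r x : ℝ) : ℝ := |x| ^ r * Real.sign x

/-- u solves (⌊u''⌉^{p-1})'' = λ⌊u⌉^{q-1} on [0,t₀] with Navier boundary conditions. -/
def NavierSol (p q lam t₀ : ℝ) (u : ℝ → ℝ) : Prop :=
  ContDiff ℝ 2 u ∧ ContDiff ℝ 2 (fun t => spow (p - 1) (deriv (deriv u) t)) ∧
  (∀ t ∈ Set.Icc (0:ℝ) t₀,
    deriv (deriv fun s => spow (p - 1) (deriv (deriv u) s)) t = lam * spow (q - 1) (u t)) ∧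
  u 0 = 0 ∧ u t₀ = 0 ∧ deriv (deriv u) 0 = 0 ∧ deriv (deriv u) t₀ = 0

/-- the 2-periodic odd extension of the first (positive, normalized)
eigenfunction generates, by fₙ(t) = f₁*(nt)/n², the n-th spectral couple on [0,1]
with λₙ = n^{2q}λ₁ and exactly n-1 interior zeros. -/

theorem negTendsto : Tendsto (Neg.neg : ℝ → ℝ) (𝓝[<] 0) (𝓝[>] 0) := by
  apply tendsto_nhdsWithin_of_tendsto_nhds_of_eventually_within
  · exact (by simpa using (continuous_neg.tendsto (0:ℝ)) : Tendsto (Neg.neg : ℝ → ℝ) (𝓝 0) (𝓝 0)).mono_left nhdsWithin_le_nhds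
  · filter_upwards [self_mem_nhdsWithin] with x hx
    simpa using hx

theorem oddDeriv (φ : ℝ → ℝ) (h : ∀ s, φ (-s) = -φ s) (L : ℝ)
    (hd : HasDerivWithinAt φ L (Ici 0) 0) : HasDerivAt φ L 0 := by
  have h0 : φ 0 = 0 := by have := h 0; simp at this; linarith
  have hslope : ∀ s, slope φ 0 (-s) = slope φ 0 s := by
    intro s
    simp [slope_def_field, h s, h0, div_eq_div_iff]
  have hr : Tendsto (slope φ 0) (𝓝[>] 0) (𝓝 L) := by
    have := hasDerivWithinAt_iff_tendsto_slope.1 hd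
    rwa [Ici_sdiff_left] at this
  have hl : Tendsto (slope φ 0) (𝓝[<] 0) (𝓝 L) := by
    have := hr.comp negTendsto
    convert this using 1
    funext s; simp [Function.comp, hslope]
  rw [hasDerivAt_iff_tendsto_slope, ← nhdsLT_sup_nhdsGT (0:ℝ), tendsto_sup]
  exact ⟨hl, hr⟩

theorem evenDeriv (φ : ℝ → ℝ) (h : ∀ s, φ (-s) = φ s)
    (hd : HasDerivWithinAt φ 0 (Ici 0) 0) : HasDerivAt φ 0 0 := by
  have hslope : ∀ s, slope φ 0 (-s) = -slope φ 0 s := by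
    intro s
    simp [slope_def_field, h s, div_eq_div_iff]
    ring
  have hr : Tendsto (slope φ 0) (𝓝[>] 0) (𝓝 0) := by
    have := hasDerivWithinAt_iff_tendsto_slope.1 hd
    rwa [Ici_sdiff_left] at this
  have hl : Tendsto (slope φ 0) (𝓝[<] 0) (𝓝 0) := by
    have := (hr.comp negTendsto).neg
    rw [neg_zero] at this
    convert this using 1
    funext s; simp [Function.comp, hslope]
  rw [hasDerivAt_iff_tendsto_slope, ← nhdsLT_sup_nhdsGT (0:ℝ), tendsto_sup]
  exact ⟨hl, hr⟩

theorem oddDerivAt (φ : ℝ → ℝ) (m L : ℝ) (h : ∀ s, φ (m + s) = -φ (m - s))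
    (hd : HasDerivWithinAt φ L (Ici m) m) : HasDerivAt φ L m := by
  set ψ : ℝ → ℝ := fun s => φ (m + s) with hψ
  have hψodd : ∀ s, ψ (-s) = -ψ s := by
    intro s
    have := h s
    simp only [hψ]
    rw [show m + -s = m - s by ring]
    linarith [h s]
  have hinner : HasDerivWithinAt (fun s : ℝ => m + s) 1 (Ici (0:ℝ)) 0 := by
    simpa using ((hasDerivAt_id (0:ℝ)).const_add m).hasDerivWithinAt
  have hψd : HasDerivWithinAt ψ L (Ici 0) 0 := by
    have := HasDerivWithinAt.comp (0:ℝ) (by simpa using hd) hinner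
      (fun x hx => by simpa using hx)
    rw [mul_one] at this
    exact this
  have := oddDeriv ψ hψodd L hψd
  have h2 : HasDerivAt (fun t => ψ (t - m)) L m := by
    have := HasDerivAt.comp m (by simpa using this) ((hasDerivAt_id m).sub_const m)
    rw [mul_one] at this
    exact this
  convert h2 using 1
  funext t; simp [hψ]

theorem evenDerivAt (φ : ℝ → ℝ) (m : ℝ) (h : ∀ s, φ (m + s) = φ (m - s))
    (hd : HasDerivWithinAt φ 0 (Ici m) m) : HasDerivAt φ 0 m := by
  set ψ : ℝ → ℝ := fun s => φ (m + s) with hψ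
  have hψeven : ∀ s, ψ (-s) = ψ s := by
    intro s
    simp only [hψ]
    rw [show m + -s = m - s by ring]
    exact (h s).symm
  have hinner : HasDerivWithinAt (fun s : ℝ => m + s) 1 (Ici (0:ℝ)) 0 := by
    simpa using ((hasDerivAt_id (0:ℝ)).const_add m).hasDerivWithinAt
  have hψd : HasDerivWithinAt ψ 0 (Ici 0) 0 := by
    have := HasDerivWithinAt.comp (0:ℝ) (by simpa using hd) hinner
      (fun x hx => by simpa using hx)
    rw [mul_one] at this
    exact this
  have := evenDeriv ψ hψeven hψd
  have h2 : HasDerivAt (fun t => ψ (t - m)) 0 m := by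
    have := HasDerivAt.comp m (by simpa using this) ((hasDerivAt_id m).sub_const m)
    rw [mul_one] at this
    exact this
  convert h2 using 1
  funext t; simp [hψ]

theorem per_int (G : ℝ → ℝ) (hper : ∀ t, G (t + 2) = G t) :
    ∀ (k : ℤ) (t : ℝ), G (t + 2 * k) = G t := by
  intro k
  induction k using Int.induction_on with
  | zero => simp
  | succ k ih =>
      intro t
      have h1 : t + 2 * ((k : ℤ) + 1 : ℤ) = (t + 2 * (k:ℤ)) + 2 := by push_cast; ring
      rw [h1, hper, ih]
  | pred k ih =>
      intro t
      have h1 : t + 2 * (-(k : ℤ) - 1 : ℤ) = (t + 2 * (-(k:ℤ))) - 2 := by push_cast; ring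
      have h2 := hper (t + 2 * (-(k:ℤ)) - 2)
      rw [h1, ← ih t, ← h2]
      push_cast
      ring_nf

theorem sym_int (G : ℝ → ℝ) (hodd : ∀ t, G (-t) = -G t) (hper : ∀ t, G (t + 2) = G t) :
    ∀ (m : ℤ) (s : ℝ), G (m + s) = -G (m - s) := by
  intro m s
  have h1 : G ((m:ℝ) - s) = G (-(m + s) + 2 * m) := by ring_nf
  rw [h1, per_int G hper m, hodd]
  ring

theorem zero_int (G : ℝ → ℝ) (hodd : ∀ t, G (-t) = -G t) (hper : ∀ t, G (t + 2) = G t) :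
    ∀ (m : ℤ), G m = 0 := by
  intro m
  have := sym_int G hodd hper m 0
  simp at this
  linarith

theorem reduce (t : ℝ) : ∃ (k : ℤ) (s : ℝ), s ∈ Icc (0:ℝ) 1 ∧ (t = 2 * k + s ∨ t = 2 * k - s) := by
  rcases Int.even_or_odd ⌊t⌋ with ⟨k, hk⟩ | ⟨k, hk⟩
  · refine ⟨k, t - ⌊t⌋, ⟨by simp [Int.floor_le], ?_⟩, Or.inl ?_⟩
    · have := Int.lt_floor_add_one t; linarith
    · have : ((⌊t⌋ : ℤ) : ℝ) = 2 * k := by rw [hk]; push_cast; ring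
      linarith [this]
  · refine ⟨k + 1, (⌊t⌋ : ℝ) + 1 - t, ⟨by linarith [Int.lt_floor_add_one t], by linarith [Int.floor_le t]⟩, Or.inr ?_⟩
    have : ((⌊t⌋ : ℤ) : ℝ) = 2 * k + 1 := by rw [hk]; push_cast; ring
    push_cast
    linarith [this]

theorem val_r (F G : ℝ → ℝ) (hper : ∀ t, G (t + 2) = G t)
    (heq : ∀ t ∈ Icc (0:ℝ) 1, G t = F t) :
    ∀ (k : ℤ), ∀ s ∈ Icc (0:ℝ) 1, G (2 * k + s) = F s := by
  intro k s hs
  have : (2 * (k:ℝ) + s) = s + 2 * k := by ring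
  rw [this, per_int G hper k s, heq s hs]

theorem val_l (F G : ℝ → ℝ) (hodd : ∀ t, G (-t) = -G t) (hper : ∀ t, G (t + 2) = G t)
    (heq : ∀ t ∈ Icc (0:ℝ) 1, G t = F t) :
    ∀ (k : ℤ), ∀ s ∈ Icc (0:ℝ) 1, G (2 * k - s) = -F s := by
  intro k s hs
  have h := sym_int G hodd hper (2 * k) s
  push_cast at h
  rw [← val_r F G hper heq k s hs]
  linarith

theorem hshift (F : ℝ → ℝ) (hFd : Differentiable ℝ F) (c t : ℝ) :
    HasDerivAt (fun u => F (u - c)) (deriv F (t - c)) t :=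
  HasDerivAt.comp_sub_const t c ((hFd _).hasDerivAt)

theorem hreflect (F : ℝ → ℝ) (hFd : Differentiable ℝ F) (c t : ℝ) :
    HasDerivAt (fun u => -F (c - u)) (deriv F (c - t)) t := by
  have := (HasDerivAt.comp_const_sub c t ((hFd _).hasDerivAt)).neg
  rw [neg_neg] at this
  exact this

theorem oddExt (F G : ℝ → ℝ) (hF : ContDiff ℝ 2 F)
    (hodd : ∀ t, G (-t) = -G t) (hper : ∀ t, G (t + 2) = G t)
    (heq : ∀ t ∈ Icc (0:ℝ) 1, G t = F t)
    (hF0 : F 0 = 0) (hF1 : F 1 = 0)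
    (hF0'' : deriv (deriv F) 0 = 0) (hF1'' : deriv (deriv F) 1 = 0) :
    ContDiff ℝ 2 G ∧
    (∀ (k : ℤ), ∀ s ∈ Icc (0:ℝ) 1,
       deriv (deriv G) (2 * k + s) = deriv (deriv F) s ∧
       deriv (deriv G) (2 * k - s) = -deriv (deriv F) s) := by
  have hFd : Differentiable ℝ F := hF.differentiable (by norm_num)
  have h2 : ContDiff ℝ (1+1) F := by norm_num at hF ⊢; exact hF
  have h1 : ContDiff ℝ 1 (deriv F) := (contDiff_succ_iff_deriv.mp h2).2.2
  have hF1d : Differentiable ℝ (deriv F) := (contDiff_one_iff_deriv.mp h1).1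
  have hF2c : Continuous (deriv (deriv F)) := (contDiff_one_iff_deriv.mp h1).2
  have vR := val_r F G hper heq
  have vL := val_l F G hodd hper heq
  -- closed-interval pointwise formulas rephrased
  have vR' : ∀ (k : ℤ), ∀ u ∈ Icc ((2*k:ℝ)) (2*k+1), G u = F (u - 2*k) := by
    intro k u hu
    have h := vR k (u - 2*k) ⟨by linarith [hu.1], by linarith [hu.2]⟩
    rwa [show (2*(k:ℝ) + (u - 2*k)) = u by ring] at h
  have vL' : ∀ (k : ℤ), ∀ u ∈ Icc ((2*k:ℝ)-1) (2*k), G u = -F (2*k - u) := by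
    intro k u hu
    have h := vL k (2*k - u) ⟨by linarith [hu.2], by linarith [hu.1]⟩
    rwa [show (2*(k:ℝ) - (2*k - u)) = u by ring] at h
  -- local eventual equalities on open pieces
  have locr : ∀ (k : ℤ) (t : ℝ), t ∈ Ioo ((2*k : ℝ)) (2*k+1) →
      G =ᶠ[𝓝 t] (fun u => F (u - 2*k)) := by
    intro k t ht
    filter_upwards [Ioo_mem_nhds ht.1 ht.2] with u hu
    exact vR' k u ⟨hu.1.le, hu.2.le⟩
  have locl : ∀ (k : ℤ) (t : ℝ), t ∈ Ioo ((2*k : ℝ) - 1) (2*k) →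
      G =ᶠ[𝓝 t] (fun u => -F (2*k - u)) := by
    intro k t ht
    filter_upwards [Ioo_mem_nhds ht.1 ht.2] with u hu
    exact vL' k u ⟨hu.1.le, hu.2.le⟩
  -- one-sided neighborhoods memberships
  have memR : ∀ (k : ℤ), Icc ((2*k:ℝ)) (2*k+1) ∈ 𝓝[Ici ((2*k:ℝ))] (2*(k:ℝ)) := by
    intro k
    exact Icc_mem_nhdsGE_of_mem ⟨le_refl _, by linarith⟩
  have memL : ∀ (k : ℤ), Icc ((2*k:ℝ)-1) (2*k) ∈ 𝓝[Iic ((2*k:ℝ))] (2*(k:ℝ)) := by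
    intro k
    exact Icc_mem_nhdsLE_of_mem ⟨by linarith, le_refl _⟩
  have memR1 : ∀ (k : ℤ), Icc ((2*k:ℝ)+1) (2*k+2) ∈ 𝓝[Ici ((2*k:ℝ)+1)] (2*(k:ℝ)+1) := by
    intro k
    exact Icc_mem_nhdsGE_of_mem ⟨le_refl _, by linarith⟩
  have memL1 : ∀ (k : ℤ), Icc ((2*k:ℝ)) (2*k+1) ∈ 𝓝[Iic ((2*k:ℝ)+1)] (2*(k:ℝ)+1) := by
    intro k
    exact Icc_mem_nhdsLE_of_mem ⟨by linarith, le_refl _⟩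
  -- formula on [2k+1, 2k+2] : G u = -F (2k+2 - u)
  have vL2 : ∀ (k : ℤ), ∀ u ∈ Icc ((2*k:ℝ)+1) (2*k+2), G u = -F (2*(k:ℝ)+2 - u) := by
    intro k u hu
    have h := vL' (k+1) u (by push_cast; constructor <;> linarith [hu.1, hu.2])
    push_cast at h
    rwa [show (2*((k:ℝ)+1) - u) = 2*(k:ℝ)+2 - u by ring] at h
  -- one-sided derivatives of G at integers
  have hR : ∀ (k : ℤ), HasDerivWithinAt G (deriv F 0) (Ici ((2*k:ℝ))) (2*(k:ℝ)) := by
    intro k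
    have hff := hshift F hFd (2*(k:ℝ)) (2*(k:ℝ))
    rw [show (2*(k:ℝ) - 2*k) = 0 by ring] at hff
    refine hff.hasDerivWithinAt.congr_of_eventuallyEq ?_ ?_
    · filter_upwards [memR k] with u hu
      exact vR' k u hu
    · exact vR' k (2*(k:ℝ)) ⟨le_refl _, by linarith⟩
  have hL : ∀ (k : ℤ), HasDerivWithinAt G (deriv F 1) (Ici ((2*k:ℝ)+1)) (2*(k:ℝ)+1) := by
    intro k
    have hff := hreflect F hFd (2*(k:ℝ)+2) (2*(k:ℝ)+1)
    rw [show (2*(k:ℝ)+2 - (2*(k:ℝ)+1)) = 1 by ring] at hff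
    refine hff.hasDerivWithinAt.congr_of_eventuallyEq ?_ ?_
    · filter_upwards [memR1 k] with u hu
      exact vL2 k u hu
    · exact vL2 k (2*(k:ℝ)+1) ⟨le_refl _, by linarith⟩
  -- symmetry about integers
  have hsym2k : ∀ (k : ℤ) (s : ℝ), G (2*(k:ℝ) + s) = -G (2*(k:ℝ) - s) := by
    intro k s
    have := sym_int G hodd hper (2*k) s
    push_cast at this; exact this
  have hsym2k1 : ∀ (k : ℤ) (s : ℝ), G ((2*(k:ℝ)+1) + s) = -G ((2*(k:ℝ)+1) - s) := by
    intro k s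
    have := sym_int G hodd hper (2*k+1) s
    push_cast at this
    convert this using 2 <;> ring
  have hInt0 : ∀ (k : ℤ), HasDerivAt G (deriv F 0) (2*(k:ℝ)) :=
    fun k => oddDerivAt G (2*(k:ℝ)) (deriv F 0) (hsym2k k) (hR k)
  have hInt1 : ∀ (k : ℤ), HasDerivAt G (deriv F 1) ((2*(k:ℝ))+1) :=
    fun k => oddDerivAt G ((2*(k:ℝ))+1) (deriv F 1) (hsym2k1 k) (hL k)
  -- interior derivatives
  have hIntr : ∀ (k : ℤ), ∀ s ∈ Ioo (0:ℝ) 1, HasDerivAt G (deriv F s) (2*(k:ℝ) + s) := by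
    intro k s hs
    have hff := hshift F hFd (2*(k:ℝ)) (2*(k:ℝ)+s)
    rw [show (2*(k:ℝ)+s - 2*k) = s by ring] at hff
    exact hff.congr_of_eventuallyEq (locr k _ ⟨by linarith [hs.1], by linarith [hs.2]⟩)
  have hIntl : ∀ (k : ℤ), ∀ s ∈ Ioo (0:ℝ) 1, HasDerivAt G (deriv F s) (2*(k:ℝ) - s) := by
    intro k s hs
    have hff := hreflect F hFd (2*(k:ℝ)) (2*(k:ℝ)-s)
    rw [show (2*(k:ℝ) - (2*(k:ℝ)-s)) = s by ring] at hff
    exact hff.congr_of_eventuallyEq (locl k _ ⟨by linarith [hs.2], by linarith [hs.1]⟩)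
  -- combined first-derivative statement
  have hd1 : ∀ (k : ℤ), ∀ s ∈ Icc (0:ℝ) 1,
      HasDerivAt G (deriv F s) (2*(k:ℝ) + s) ∧ HasDerivAt G (deriv F s) (2*(k:ℝ) - s) := by
    intro k s hs
    rcases eq_or_lt_of_le hs.1 with h0 | h0
    · constructor
      · rw [← h0]; simpa using hInt0 k
      · rw [← h0]; simpa using hInt0 k
    rcases eq_or_lt_of_le hs.2 with h1 | h1
    · subst h1
      constructor
      · exact hInt1 k
      · have := hInt1 (k-1)
        push_cast at this
        rwa [show (2*((k:ℝ)-1))+1 = 2*(k:ℝ) - 1 by ring] at this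
    · exact ⟨hIntr k s ⟨h0, h1⟩, hIntl k s ⟨h0, h1⟩⟩
  have hGdiff : Differentiable ℝ G := by
    intro t
    obtain ⟨k, s, hs, ht | ht⟩ := reduce t
    · rw [ht]; exact ((hd1 k s hs).1).differentiableAt
    · rw [ht]; exact ((hd1 k s hs).2).differentiableAt
  have hdG_r : ∀ (k : ℤ), ∀ u ∈ Icc ((2*k:ℝ)) (2*k+1), deriv G u = deriv F (u - 2*k) := by
    intro k u hu
    have h := ((hd1 k (u - 2*k) ⟨by linarith [hu.1], by linarith [hu.2]⟩).1).deriv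
    rwa [show (2*(k:ℝ) + (u - 2*k)) = u by ring] at h
  have hdG_l : ∀ (k : ℤ), ∀ u ∈ Icc ((2*k:ℝ)-1) (2*k), deriv G u = deriv F (2*k - u) := by
    intro k u hu
    have h := ((hd1 k (2*k - u) ⟨by linarith [hu.2], by linarith [hu.1]⟩).2).deriv
    rwa [show (2*(k:ℝ) - (2*k - u)) = u by ring] at h
  have hdG_l2 : ∀ (k : ℤ), ∀ u ∈ Icc ((2*k:ℝ)+1) (2*k+2), deriv G u = deriv F (2*(k:ℝ)+2 - u) := by
    intro k u hu
    have h := hdG_l (k+1) u (by push_cast; constructor <;> linarith [hu.1, hu.2])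
    push_cast at h
    rwa [show (2*((k:ℝ)+1) - u) = 2*(k:ℝ)+2 - u by ring] at h
  -- even symmetry of deriv G about integers
  have hG1even : ∀ (m : ℤ) (s : ℝ), deriv G ((m:ℝ) + s) = deriv G ((m:ℝ) - s) := by
    intro m s
    have hfun : (fun s : ℝ => G ((m:ℝ) + s)) = (fun s => -G ((m:ℝ) - s)) :=
      funext (sym_int G hodd hper m)
    have hl : HasDerivAt (fun s : ℝ => G ((m:ℝ) + s)) (deriv G ((m:ℝ) + s)) s :=
      HasDerivAt.comp_const_add (m:ℝ) s ((hGdiff _).hasDerivAt)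
    have hr : HasDerivAt (fun u : ℝ => -G ((m:ℝ) - u)) (deriv G ((m:ℝ) - s)) s :=
      hreflect G hGdiff (m:ℝ) s
    rw [hfun] at hl
    exact hl.unique hr
  have heven2k : ∀ (k : ℤ) (s : ℝ), deriv G (2*(k:ℝ) + s) = deriv G (2*(k:ℝ) - s) := by
    intro k s
    have := hG1even (2*k) s
    push_cast at this; exact this
  have heven2k1 : ∀ (k : ℤ) (s : ℝ), deriv G ((2*(k:ℝ)+1) + s) = deriv G ((2*(k:ℝ)+1) - s) := by
    intro k s
    have := hG1even (2*k+1) s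
    push_cast at this
    convert this using 2 <;> ring
  -- one-sided second derivatives at integers
  have hR2 : ∀ (k : ℤ), HasDerivWithinAt (deriv G) 0 (Ici ((2*k:ℝ))) (2*(k:ℝ)) := by
    intro k
    have hff := hshift (deriv F) hF1d (2*(k:ℝ)) (2*(k:ℝ))
    rw [show (2*(k:ℝ) - 2*k) = 0 by ring, hF0''] at hff
    refine hff.hasDerivWithinAt.congr_of_eventuallyEq ?_ ?_
    · filter_upwards [memR k] with u hu
      exact hdG_r k u hu
    · exact hdG_r k (2*(k:ℝ)) ⟨le_refl _, by linarith⟩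
  have hR2' : ∀ (k : ℤ), HasDerivWithinAt (deriv G) 0 (Ici ((2*k:ℝ)+1)) (2*(k:ℝ)+1) := by
    intro k
    have hff : HasDerivAt (fun u => deriv F (2*(k:ℝ)+2 - u))
        (-(deriv (deriv F) (2*(k:ℝ)+2 - (2*(k:ℝ)+1)))) (2*(k:ℝ)+1) :=
      HasDerivAt.comp_const_sub (2*(k:ℝ)+2) (2*(k:ℝ)+1) ((hF1d _).hasDerivAt)
    rw [show (2*(k:ℝ)+2 - (2*(k:ℝ)+1)) = 1 by ring, hF1'', neg_zero] at hff
    refine hff.hasDerivWithinAt.congr_of_eventuallyEq ?_ ?_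
    · filter_upwards [memR1 k] with u hu
      exact hdG_l2 k u hu
    · exact hdG_l2 k (2*(k:ℝ)+1) ⟨le_refl _, by linarith⟩
  have hInt2_0 : ∀ (k : ℤ), HasDerivAt (deriv G) 0 (2*(k:ℝ)) :=
    fun k => evenDerivAt (deriv G) (2*(k:ℝ)) (heven2k k) (hR2 k)
  have hInt2_1 : ∀ (k : ℤ), HasDerivAt (deriv G) 0 (2*(k:ℝ)+1) :=
    fun k => evenDerivAt (deriv G) (2*(k:ℝ)+1) (heven2k1 k) (hR2' k)
  -- interior second derivatives
  have hIntr2 : ∀ (k : ℤ), ∀ s ∈ Ioo (0:ℝ) 1,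
      HasDerivAt (deriv G) (deriv (deriv F) s) (2*(k:ℝ) + s) := by
    intro k s hs
    have hff := hshift (deriv F) hF1d (2*(k:ℝ)) (2*(k:ℝ)+s)
    rw [show (2*(k:ℝ)+s - 2*k) = s by ring] at hff
    refine hff.congr_of_eventuallyEq ?_
    have ht : (2*(k:ℝ)+s) ∈ Ioo ((2*k:ℝ)) (2*k+1) := ⟨by linarith [hs.1], by linarith [hs.2]⟩
    filter_upwards [Ioo_mem_nhds ht.1 ht.2] with u hu
    exact hdG_r k u ⟨hu.1.le, hu.2.le⟩
  have hIntl2 : ∀ (k : ℤ), ∀ s ∈ Ioo (0:ℝ) 1,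
      HasDerivAt (deriv G) (-(deriv (deriv F) s)) (2*(k:ℝ) - s) := by
    intro k s hs
    have hff : HasDerivAt (fun u => deriv F (2*(k:ℝ) - u))
        (-(deriv (deriv F) (2*(k:ℝ) - (2*(k:ℝ)-s)))) (2*(k:ℝ)-s) :=
      HasDerivAt.comp_const_sub (2*(k:ℝ)) (2*(k:ℝ)-s) ((hF1d _).hasDerivAt)
    rw [show (2*(k:ℝ) - (2*(k:ℝ)-s)) = s by ring] at hff
    refine hff.congr_of_eventuallyEq ?_
    have ht : (2*(k:ℝ)-s) ∈ Ioo ((2*k:ℝ)-1) (2*k) := ⟨by linarith [hs.2], by linarith [hs.1]⟩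
    filter_upwards [Ioo_mem_nhds ht.1 ht.2] with u hu
    exact hdG_l k u ⟨hu.1.le, hu.2.le⟩
  -- combined second-derivative statement
  have hd2 : ∀ (k : ℤ), ∀ s ∈ Icc (0:ℝ) 1,
      HasDerivAt (deriv G) (deriv (deriv F) s) (2*(k:ℝ) + s) ∧
      HasDerivAt (deriv G) (-(deriv (deriv F) s)) (2*(k:ℝ) - s) := by
    intro k s hs
    rcases eq_or_lt_of_le hs.1 with h0 | h0
    · rw [← h0, hF0'']
      constructor
      · simpa using hInt2_0 k
      · simpa using hInt2_0 k
    rcases eq_or_lt_of_le hs.2 with h1 | h1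
    · subst h1
      rw [hF1'']
      constructor
      · exact hInt2_1 k
      · have := hInt2_1 (k-1)
        push_cast at this
        rw [show (2*((k:ℝ)-1))+1 = 2*(k:ℝ) - 1 by ring] at this
        simpa using this
    · exact ⟨hIntr2 k s ⟨h0, h1⟩, hIntl2 k s ⟨h0, h1⟩⟩
  have hG1diff : Differentiable ℝ (deriv G) := by
    intro t
    obtain ⟨k, s, hs, ht | ht⟩ := reduce t
    · rw [ht]; exact ((hd2 k s hs).1).differentiableAt
    · rw [ht]; exact ((hd2 k s hs).2).differentiableAt
  have hdG2_ru : ∀ (k : ℤ), ∀ u ∈ Icc ((2*k:ℝ)) (2*k+1),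
      deriv (deriv G) u = deriv (deriv F) (u - 2*k) := by
    intro k u hu
    have h := ((hd2 k (u - 2*k) ⟨by linarith [hu.1], by linarith [hu.2]⟩).1).deriv
    rwa [show (2*(k:ℝ) + (u - 2*k)) = u by ring] at h
  have hdG2_lu : ∀ (k : ℤ), ∀ u ∈ Icc ((2*k:ℝ)-1) (2*k),
      deriv (deriv G) u = -(deriv (deriv F) (2*k - u)) := by
    intro k u hu
    have h := ((hd2 k (2*k - u) ⟨by linarith [hu.2], by linarith [hu.1]⟩).2).deriv
    rwa [show (2*(k:ℝ) - (2*k - u)) = u by ring] at h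
  have hdG2_lu2 : ∀ (k : ℤ), ∀ u ∈ Icc ((2*k:ℝ)+1) (2*k+2),
      deriv (deriv G) u = -(deriv (deriv F) (2*(k:ℝ)+2 - u)) := by
    intro k u hu
    have h := hdG2_lu (k+1) u (by push_cast; constructor <;> linarith [hu.1, hu.2])
    push_cast at h
    rwa [show (2*((k:ℝ)+1) - u) = 2*(k:ℝ)+2 - u by ring] at h
  -- continuity of the second derivative
  have hcr : ∀ (k : ℤ), ∀ s ∈ Ioo (0:ℝ) 1, ContinuousAt (deriv (deriv G)) (2*(k:ℝ)+s) := by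
    intro k s hs
    have hcont : ContinuousAt (fun u => deriv (deriv F) (u - 2*(k:ℝ))) (2*(k:ℝ)+s) :=
      (hF2c.comp (continuous_id.sub continuous_const)).continuousAt
    refine hcont.congr ?_
    have ht : (2*(k:ℝ)+s) ∈ Ioo ((2*k:ℝ)) (2*k+1) := ⟨by linarith [hs.1], by linarith [hs.2]⟩
    filter_upwards [Ioo_mem_nhds ht.1 ht.2] with u hu
    exact (hdG2_ru k u ⟨hu.1.le, hu.2.le⟩).symm
  have hcl : ∀ (k : ℤ), ∀ s ∈ Ioo (0:ℝ) 1, ContinuousAt (deriv (deriv G)) (2*(k:ℝ)-s) := by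
    intro k s hs
    have hcont : ContinuousAt (fun u => -(deriv (deriv F) (2*(k:ℝ) - u))) (2*(k:ℝ)-s) :=
      ((hF2c.comp (continuous_const.sub continuous_id)).neg).continuousAt
    refine hcont.congr ?_
    have ht : (2*(k:ℝ)-s) ∈ Ioo ((2*k:ℝ)-1) (2*k) := ⟨by linarith [hs.2], by linarith [hs.1]⟩
    filter_upwards [Ioo_mem_nhds ht.1 ht.2] with u hu
    exact (hdG2_lu k u ⟨hu.1.le, hu.2.le⟩).symm
  have hc0 : ∀ (k : ℤ), ContinuousAt (deriv (deriv G)) (2*(k:ℝ)) := by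
    intro k
    have hright : ContinuousWithinAt (deriv (deriv G)) (Ici (2*(k:ℝ))) (2*(k:ℝ)) := by
      have hcont : ContinuousWithinAt (fun u => deriv (deriv F) (u - 2*(k:ℝ)))
          (Icc ((2*k:ℝ)) (2*k+1)) (2*(k:ℝ)) :=
        ((hF2c.comp (continuous_id.sub continuous_const)).continuousAt).continuousWithinAt
      have hw : ContinuousWithinAt (deriv (deriv G)) (Icc ((2*k:ℝ)) (2*k+1)) (2*(k:ℝ)) :=
        hcont.congr (fun u hu => hdG2_ru k u hu) (hdG2_ru k (2*(k:ℝ)) ⟨le_refl _, by linarith⟩)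
      rw [ContinuousWithinAt, ← nhdsWithin_Icc_eq_nhdsGE
        (show (2*(k:ℝ)) < 2*k+1 by linarith)]
      exact hw
    have hleft : ContinuousWithinAt (deriv (deriv G)) (Iic (2*(k:ℝ))) (2*(k:ℝ)) := by
      have hcont : ContinuousWithinAt (fun u => -(deriv (deriv F) (2*(k:ℝ) - u)))
          (Icc ((2*k:ℝ)-1) (2*k)) (2*(k:ℝ)) :=
        (((hF2c.comp (continuous_const.sub continuous_id)).neg).continuousAt).continuousWithinAt
      have hw : ContinuousWithinAt (deriv (deriv G)) (Icc ((2*k:ℝ)-1) (2*k)) (2*(k:ℝ)) :=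
        hcont.congr (fun u hu => hdG2_lu k u hu) (hdG2_lu k (2*(k:ℝ)) ⟨by linarith, le_refl _⟩)
      rw [ContinuousWithinAt, ← nhdsWithin_Icc_eq_nhdsLE
        (show (2*(k:ℝ))-1 < 2*k by linarith)]
      exact hw
    have := hleft.union hright
    rwa [Iic_union_Ici, continuousWithinAt_univ] at this
  have hc1 : ∀ (k : ℤ), ContinuousAt (deriv (deriv G)) (2*(k:ℝ)+1) := by
    intro k
    have hright : ContinuousWithinAt (deriv (deriv G)) (Ici (2*(k:ℝ)+1)) (2*(k:ℝ)+1) := by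
      have hcont : ContinuousWithinAt (fun u => -(deriv (deriv F) (2*(k:ℝ)+2 - u)))
          (Icc ((2*k:ℝ)+1) (2*k+2)) (2*(k:ℝ)+1) :=
        (((hF2c.comp (continuous_const.sub continuous_id)).neg).continuousAt).continuousWithinAt
      have hw : ContinuousWithinAt (deriv (deriv G)) (Icc ((2*k:ℝ)+1) (2*k+2)) (2*(k:ℝ)+1) :=
        hcont.congr (fun u hu => hdG2_lu2 k u hu) (hdG2_lu2 k (2*(k:ℝ)+1) ⟨le_refl _, by linarith⟩)
      rw [ContinuousWithinAt, ← nhdsWithin_Icc_eq_nhdsGE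
        (show (2*(k:ℝ))+1 < 2*k+2 by linarith)]
      exact hw
    have hleft : ContinuousWithinAt (deriv (deriv G)) (Iic (2*(k:ℝ)+1)) (2*(k:ℝ)+1) := by
      have hcont : ContinuousWithinAt (fun u => deriv (deriv F) (u - 2*(k:ℝ)))
          (Icc ((2*k:ℝ)) (2*k+1)) (2*(k:ℝ)+1) :=
        ((hF2c.comp (continuous_id.sub continuous_const)).continuousAt).continuousWithinAt
      have hw : ContinuousWithinAt (deriv (deriv G)) (Icc ((2*k:ℝ)) (2*k+1)) (2*(k:ℝ)+1) :=
        hcont.congr (fun u hu => hdG2_ru k u hu) (hdG2_ru k (2*(k:ℝ)+1) ⟨by linarith, le_refl _⟩)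
      rw [ContinuousWithinAt, ← nhdsWithin_Icc_eq_nhdsLE
        (show (2*(k:ℝ)) < 2*k+1 by linarith)]
      exact hw
    have := hleft.union hright
    rwa [Iic_union_Ici, continuousWithinAt_univ] at this
  have hG2c : Continuous (deriv (deriv G)) := by
    rw [continuous_iff_continuousAt]
    intro t
    obtain ⟨k, s, hs, ht | ht⟩ := reduce t
    · rcases eq_or_lt_of_le hs.1 with h0 | h0
      · rw [ht, ← h0]
        simpa using hc0 k
      rcases eq_or_lt_of_le hs.2 with h1 | h1
      · rw [ht, h1]
        exact hc1 k
      · rw [ht]; exact hcr k s ⟨h0, h1⟩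
    · rcases eq_or_lt_of_le hs.1 with h0 | h0
      · rw [ht, ← h0]
        simpa using hc0 k
      rcases eq_or_lt_of_le hs.2 with h1 | h1
      · rw [ht, h1]
        have := hc1 (k-1)
        push_cast at this
        rwa [show (2*((k:ℝ)-1))+1 = 2*(k:ℝ) - 1 by ring] at this
      · rw [ht]; exact hcl k s ⟨h0, h1⟩
  constructor
  · have h2' : ContDiff ℝ (1+1) G := by
      rw [contDiff_succ_iff_deriv]
      refine ⟨hGdiff, by simp, ?_⟩
      rw [contDiff_one_iff_deriv]
      exact ⟨hG1diff, hG2c⟩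
    norm_num at h2' ⊢; exact h2'
  · intro k s hs
    refine ⟨?_, ?_⟩
    · exact ((hd2 k s hs).1).deriv
    · exact ((hd2 k s hs).2).deriv

theorem spow_zero (r : ℝ) : spow r 0 = 0 := by
  simp [spow, Real.sign_zero]

theorem spow_neg (r x : ℝ) : spow r (-x) = -spow r x := by
  simp [spow, Real.sign_neg]

theorem sign_div_pos (x c : ℝ) (hc : 0 < c) : Real.sign (x / c) = Real.sign x := by
  rcases lt_trichotomy x 0 with h | h | h
  · rw [Real.sign_of_neg h, Real.sign_of_neg (div_neg_of_neg_of_pos h hc)]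
  · simp [h]
  · rw [Real.sign_of_pos h, Real.sign_of_pos (div_pos h hc)]

theorem spow_div_pos (r x c : ℝ) (hc : 0 < c) : spow r (x / c) = spow r x / c ^ r := by
  unfold spow
  rw [abs_div, abs_of_pos hc, Real.div_rpow (abs_nonneg x) hc.le, sign_div_pos x c hc]
  ring

theorem spow_pos' (r x : ℝ) (hx : 0 < x) : 0 < spow r x := by
  unfold spow
  rw [Real.sign_of_pos hx, mul_one]
  exact Real.rpow_pos_of_pos (abs_pos.mpr hx.ne') r

theorem spow_ne_zero (r x : ℝ) (hx : x ≠ 0) : spow r x ≠ 0 := by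
  rcases hx.lt_or_gt with h | h
  · have : spow r x = -spow r (-x) := by rw [spow_neg]; ring
    rw [this]
    have := spow_pos' r (-x) (by linarith)
    linarith
  · exact (spow_pos' r x h).ne'

theorem deriv_of_odd (G : ℝ → ℝ) (hodd : ∀ t, G (-t) = -G t) (t : ℝ) :
    deriv G (-t) = deriv G t := by
  have h : (fun x : ℝ => G (-x)) = fun x => -G x := funext hodd
  have h1 : deriv (fun x : ℝ => G (-x)) t = -deriv G (-t) := deriv_comp_neg G t
  rw [h, deriv.fun_neg] at h1
  linarith

theorem deriv_of_even (G : ℝ → ℝ) (heven : ∀ t, G (-t) = G t) (t : ℝ) :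
    deriv G (-t) = -deriv G t := by
  have h : (fun x : ℝ => G (-x)) = G := funext heven
  have h1 : deriv (fun x : ℝ => G (-x)) t = -deriv G (-t) := deriv_comp_neg G t
  rw [h] at h1
  linarith

theorem deriv_of_per (G : ℝ → ℝ) (hper : ∀ t, G (t + 2) = G t) (t : ℝ) :
    deriv G (t + 2) = deriv G t := by
  have h : (fun x : ℝ => G (x + 2)) = G := funext hper
  have h1 : deriv (fun x : ℝ => G (x + 2)) t = deriv G (t + 2) := deriv_comp_add_const G 2 t
  rw [h] at h1
  exact h1.symm

theorem stmt17 (p q lam1 : ℝ) (hp : 1 < p) (hq : 1 < q) (hlam : 0 < lam1)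
    (f1 : ℝ → ℝ) (hf1 : NavierSol p q lam1 1 f1)
    (hpos : ∀ t ∈ Set.Ioo (0:ℝ) 1, 0 < f1 t)
    (hnorm1 : (∫ t in (0:ℝ)..1, |deriv (deriv f1) t| ^ p) ^ (1 / p) = 1)
    (g : ℝ → ℝ) (hgodd : ∀ t, g (-t) = -g t) (hgper : ∀ t, g (t + 2) = g t)
    (hgext : ∀ t ∈ Set.Icc (0:ℝ) 1, g t = f1 t)
    (n : ℕ) (hn : 1 ≤ n)
    (fn : ℝ → ℝ) (hfn : ∀ t, fn t = g (n * t) / (n : ℝ) ^ 2) :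
    NavierSol p q ((n : ℝ) ^ (2 * q) * lam1) 1 fn ∧
      (∫ t in (0:ℝ)..1, |deriv (deriv fn) t| ^ p) ^ (1 / p) = 1 ∧
      {t | t ∈ Set.Ioo (0:ℝ) 1 ∧ fn t = 0}.encard = (n - 1 : ℕ) := by
  classical
  -- unpack hypotheses on f1
  obtain ⟨hC, hK, hODE, hb0, hb1, hb0'', hb1''⟩ := hf1
  set K : ℝ → ℝ := fun t => spow (p - 1) (deriv (deriv f1) t) with hKdef
  -- extension of f1
  obtain ⟨hgC, hg2f⟩ := oddExt f1 g hC hgodd hgper hgext hb0 hb1 hb0'' hb1''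
  -- regularity of g
  have hgC' : ContDiff ℝ (1+1) g := by norm_num at hgC ⊢; exact hgC
  have hgd : Differentiable ℝ g := hgC.differentiable (by norm_num)
  have hg1C : ContDiff ℝ 1 (deriv g) := (contDiff_succ_iff_deriv.mp hgC').2.2
  have hg1d : Differentiable ℝ (deriv g) := (contDiff_one_iff_deriv.mp hg1C).1
  have hg2c : Continuous (deriv (deriv g)) := (contDiff_one_iff_deriv.mp hg1C).2
  -- parity/periodicity of second derivative of g
  have hg1even : ∀ t, deriv g (-t) = deriv g t := deriv_of_odd g hgodd
  have hg2odd : ∀ t, deriv (deriv g) (-t) = -deriv (deriv g) t :=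
    deriv_of_even (deriv g) hg1even
  have hg1per : ∀ t, deriv g (t + 2) = deriv g t := deriv_of_per g hgper
  have hg2per : ∀ t, deriv (deriv g) (t + 2) = deriv (deriv g) t :=
    deriv_of_per (deriv g) hg1per
  -- second derivative of g on [0,1]
  have hg2eq : ∀ s ∈ Icc (0:ℝ) 1, deriv (deriv g) s = deriv (deriv f1) s := by
    intro s hs
    have h := (hg2f 0 s hs).1
    simpa using h
  -- integer values of g and of its second derivative
  have hgint : ∀ m : ℤ, g m = 0 := zero_int g hgodd hgper
  have hg2int : ∀ m : ℤ, deriv (deriv g) m = 0 := zero_int (deriv (deriv g)) hg2odd hg2per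
  -- the extension H of K
  set H : ℝ → ℝ := fun s => spow (p - 1) (deriv (deriv g) s) with hHdef
  have hHodd : ∀ t, H (-t) = -H t := by
    intro t
    simp only [hHdef, hg2odd t, spow_neg]
  have hHper : ∀ t, H (t + 2) = H t := by
    intro t
    simp only [hHdef, hg2per t]
  have hHeq : ∀ t ∈ Icc (0:ℝ) 1, H t = K t := by
    intro t ht
    simp only [hHdef, hKdef, hg2eq t ht]
  have hK0 : K 0 = 0 := by simp [hKdef, hb0'', spow_zero]
  have hK1 : K 1 = 0 := by simp [hKdef, hb1'', spow_zero]
  have hf10 : f1 0 = 0 := hb0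
  have hK0'' : deriv (deriv K) 0 = 0 := by
    have := hODE 0 ⟨le_refl _, by norm_num⟩
    rw [hb0, spow_zero, mul_zero] at this
    exact this
  have hK1'' : deriv (deriv K) 1 = 0 := by
    have := hODE 1 ⟨by norm_num, le_refl _⟩
    rw [hb1, spow_zero, mul_zero] at this
    exact this
  obtain ⟨hHC, hH2f⟩ := oddExt K H hK hHodd hHper hHeq hK0 hK1 hK0'' hK1''
  have hHC' : ContDiff ℝ (1+1) H := by norm_num at hHC ⊢; exact hHC
  have hHd : Differentiable ℝ H := hHC.differentiable (by norm_num)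
  have hH1C : ContDiff ℝ 1 (deriv H) := (contDiff_succ_iff_deriv.mp hHC').2.2
  have hH1d : Differentiable ℝ (deriv H) := (contDiff_one_iff_deriv.mp hH1C).1
  -- basic facts about n
  have hn0 : (n:ℝ) ≠ 0 := Nat.cast_ne_zero.mpr (by omega)
  have hnpos : (0:ℝ) < n := by positivity
  have hn2 : ((n:ℝ)^2) ≠ 0 := pow_ne_zero _ hn0
  -- derivatives of fn
  have hfneq : fn = fun t => g ((n:ℝ) * t) / (n:ℝ)^2 := funext hfn
  have hinner : ∀ t : ℝ, HasDerivAt (fun u : ℝ => (n:ℝ) * u) (n:ℝ) t := by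
    intro t
    simpa using (hasDerivAt_id t).const_mul (n:ℝ)
  have hfd1 : ∀ t, HasDerivAt fn (deriv g ((n:ℝ)*t) * n / (n:ℝ)^2) t := by
    intro t
    rw [hfneq]
    exact (((hgd _).hasDerivAt.comp t (hinner t))).div_const _
  have hderiv1 : deriv fn = fun t => deriv g ((n:ℝ)*t) * n / (n:ℝ)^2 :=
    funext fun t => (hfd1 t).deriv
  have hfd2 : ∀ t, HasDerivAt (deriv fn) (deriv (deriv g) ((n:ℝ)*t)) t := by
    intro t
    rw [hderiv1]
    have h1 : HasDerivAt (fun u => deriv g ((n:ℝ)*u)) (deriv (deriv g) ((n:ℝ)*t) * n) t :=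
      (hg1d _).hasDerivAt.comp t (hinner t)
    have h2 := (h1.mul_const (n:ℝ)).div_const ((n:ℝ)^2)
    have e : deriv (deriv g) ((n:ℝ)*t) = deriv (deriv g) ((n:ℝ)*t) * n * n / (n:ℝ)^2 := by
      rw [eq_div_iff hn2]
      ring
    rw [e]
    exact h2
  have hderiv2 : deriv (deriv fn) = fun t => deriv (deriv g) ((n:ℝ)*t) :=
    funext fun t => (hfd2 t).deriv
  -- the spow-composed layer
  have hlayer : (fun t => spow (p - 1) (deriv (deriv fn) t)) = fun t => H ((n:ℝ)*t) := by
    rw [hderiv2]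
  -- derivatives of the layer
  have hLd1 : ∀ t, HasDerivAt (fun u => H ((n:ℝ)*u)) (deriv H ((n:ℝ)*t) * n) t := by
    intro t
    exact (hHd _).hasDerivAt.comp t (hinner t)
  have hLderiv1 : deriv (fun u => H ((n:ℝ)*u)) = fun t => deriv H ((n:ℝ)*t) * n :=
    funext fun t => (hLd1 t).deriv
  have hLd2 : ∀ t, HasDerivAt (deriv (fun u => H ((n:ℝ)*u)))
      (deriv (deriv H) ((n:ℝ)*t) * n * n) t := by
    intro t
    rw [hLderiv1]
    exact ((hH1d _).hasDerivAt.comp t (hinner t)).mul_const (n:ℝ)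
  have hLderiv2 : ∀ t, deriv (deriv (fun u => H ((n:ℝ)*u))) t
      = deriv (deriv H) ((n:ℝ)*t) * n * n := fun t => (hLd2 t).deriv
  -- the key identity for deriv (deriv H)
  have claimA : ∀ u : ℝ, deriv (deriv H) u = lam1 * spow (q - 1) (g u) := by
    intro u
    obtain ⟨k, s, hs, hu | hu⟩ := reduce u
    · rw [hu]
      rw [(hH2f k s hs).1]
      have hode := hODE s hs
      rw [show (deriv (deriv fun s => spow (p - 1) (deriv (deriv f1) s))) = deriv (deriv K) from rfl] at hode
      rw [hode, val_r f1 g hgper hgext k s hs]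
    · rw [hu]
      rw [(hH2f k s hs).2]
      have hode := hODE s hs
      rw [show (deriv (deriv fun s => spow (p - 1) (deriv (deriv f1) s))) = deriv (deriv K) from rfl] at hode
      rw [hode, val_l f1 g hgodd hgper hgext k s hs, spow_neg]
      ring
  -- zero characterization of g
  have hfn0iff : ∀ t, (fn t = 0 ↔ g ((n:ℝ)*t) = 0) := by
    intro t
    rw [hfn t]
    simp [div_eq_zero_iff, hn2]
  have hgne : ∀ (k : ℤ), ∀ s ∈ Ioo (0:ℝ) 1, g (2*(k:ℝ)+s) ≠ 0 ∧ g (2*(k:ℝ)-s) ≠ 0 := by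
    intro k s hs
    have h1 : g (2*(k:ℝ)+s) = f1 s := val_r f1 g hgper hgext k s ⟨hs.1.le, hs.2.le⟩
    have h2 : g (2*(k:ℝ)-s) = -f1 s := val_l f1 g hgodd hgper hgext k s ⟨hs.1.le, hs.2.le⟩
    have hp1 := hpos s hs
    constructor
    · rw [h1]; linarith
    · rw [h2]; linarith
  have hzero_iff : ∀ u : ℝ, (g u = 0 ↔ ∃ m : ℤ, u = m) := by
    intro u
    constructor
    · intro hu
      obtain ⟨k, s, hs, h | h⟩ := reduce u
      · rcases eq_or_lt_of_le hs.1 with h0 | h0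
        · exact ⟨2*k, by rw [h, ← h0]; push_cast; ring⟩
        rcases eq_or_lt_of_le hs.2 with h1 | h1
        · refine ⟨2*k+1, by rw [h, h1]; push_cast; ring⟩
        · exact absurd (by rw [← h]; exact hu) (hgne k s ⟨h0, h1⟩).1
      · rcases eq_or_lt_of_le hs.1 with h0 | h0
        · exact ⟨2*k, by rw [h, ← h0]; push_cast; ring⟩
        rcases eq_or_lt_of_le hs.2 with h1 | h1
        · refine ⟨2*k-1, by rw [h, h1]; push_cast; ring⟩
        · exact absurd (by rw [← h]; exact hu) (hgne k s ⟨h0, h1⟩).2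
    · rintro ⟨m, rfl⟩
      exact hgint m
  -- ================= assembling the three conjuncts ===================
  refine ⟨⟨?_, ?_, ?_, ?_, ?_, ?_, ?_⟩, ?_, ?_⟩
  · -- ContDiff 2 fn
    rw [hfneq]
    exact (hgC.comp (contDiff_const.mul contDiff_id)).div_const _
  · -- ContDiff 2 of the spow layer
    rw [hlayer]
    exact hHC.comp (contDiff_const.mul contDiff_id)
  · -- the ODE
    intro t ht
    rw [hlayer, hLderiv2 t, claimA ((n:ℝ)*t), hfn t,
      spow_div_pos _ _ _ (by positivity : (0:ℝ) < (n:ℝ)^2)]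
    have key : ((n:ℝ)^2) ^ (q-1) * ((n:ℝ) * (n:ℝ)) = (n:ℝ) ^ (2*q) := by
      have h1 : ((n:ℝ)^2 : ℝ) ^ (q-1) = (n:ℝ) ^ (2*(q-1)) := by
        rw [← Real.rpow_natCast (n:ℝ) 2, ← Real.rpow_mul hnpos.le]
        norm_num
      have h2 : (n:ℝ) * (n:ℝ) = (n:ℝ) ^ ((2:ℝ)) := by
        rw [show ((2:ℝ)) = ((2:ℕ):ℝ) by norm_num, Real.rpow_natCast]
        ring
      rw [h1, h2, ← Real.rpow_add hnpos]
      ring_nf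
    rw [← key]
    have hne : ((n:ℝ)^2) ^ (q-1) ≠ 0 := by positivity
    field_simp
  · -- fn 0 = 0
    have h0 : g 0 = 0 := by have := hgint 0; simpa using this
    rw [hfn 0, mul_zero, h0, zero_div]
  · -- fn 1 = 0
    have h1 : g (n:ℝ) = 0 := by have := hgint (n:ℤ); push_cast at this; exact this
    rw [hfn 1, mul_one, h1, zero_div]
  · -- fn'' 0 = 0
    rw [hderiv2]
    show deriv (deriv g) ((n:ℝ)*0) = 0
    rw [mul_zero]
    have := hg2int 0; simpa using this
  · -- fn'' 1 = 0
    rw [hderiv2]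
    show deriv (deriv g) ((n:ℝ)*1) = 0
    rw [mul_one]
    have := hg2int (n:ℤ); push_cast at this; exact this
  · -- the normalization
    simp only [hderiv2]
    set φ : ℝ → ℝ := fun s => |deriv (deriv g) s| ^ p with hφ
    have hφc : Continuous φ := (hg2c.abs).rpow_const (fun x => Or.inr (by linarith))
    have hint : ∀ a b : ℝ, IntervalIntegrable φ MeasureTheory.volume a b :=
      fun a b => hφc.intervalIntegrable a b
    set C : ℝ := ∫ s in (0:ℝ)..1, |deriv (deriv f1) s| ^ p with hCdef
    have unitR : ∀ m : ℤ, (∫ s in (2*(m:ℝ))..(2*(m:ℝ)+1), φ s) = C := by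
      intro m
      have h1 := intervalIntegral.integral_comp_add_left (a := (0:ℝ)) (b := 1) φ (2*(m:ℝ))
      rw [add_zero] at h1
      rw [← h1, hCdef]
      apply intervalIntegral.integral_congr
      intro x hx
      rw [uIcc_of_le (by norm_num : (0:ℝ) ≤ 1)] at hx
      simp only [hφ]
      rw [(hg2f m x hx).1]
    have unitL : ∀ m : ℤ, (∫ s in (2*(m:ℝ)-1)..(2*(m:ℝ)), φ s) = C := by
      intro m
      have h1 := intervalIntegral.integral_comp_sub_left (a := (0:ℝ)) (b := 1) φ (2*(m:ℝ))
      rw [sub_zero] at h1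
      rw [← h1, hCdef]
      apply intervalIntegral.integral_congr
      intro x hx
      rw [uIcc_of_le (by norm_num : (0:ℝ) ≤ 1)] at hx
      simp only [hφ]
      rw [(hg2f m x hx).2, abs_neg]
    have sumN : ∀ N : ℕ, (∫ s in (0:ℝ)..(N:ℝ), φ s) = N * C := by
      intro N
      induction N with
      | zero => simp
      | succ N ih =>
        have hsplit := intervalIntegral.integral_add_adjacent_intervals
          (hint 0 (N:ℝ)) (hint (N:ℝ) ((N:ℝ)+1))
        have hlast : (∫ s in ((N:ℝ))..((N:ℝ)+1), φ s) = C := by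
          rcases Nat.even_or_odd N with ⟨m, hm⟩ | ⟨m, hm⟩
          · have hNm : (N:ℝ) = 2*((m:ℤ):ℝ) := by
              push_cast
              rw [hm]; push_cast; ring
            rw [hNm, show (2*((m:ℤ):ℝ)+1) = 2*((m:ℤ):ℝ)+1 from rfl]
            exact unitR (m:ℤ)
          · have hNm : (N:ℝ) = 2*(((m:ℤ)+1:ℤ):ℝ) - 1 := by
              push_cast
              rw [hm]; push_cast; ring
            have hNm1 : (N:ℝ)+1 = 2*(((m:ℤ)+1:ℤ):ℝ) := by
              push_cast
              rw [hm]; push_cast; ring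
            rw [hNm1]
            rw [show ((N:ℝ)) = 2*(((m:ℤ)+1:ℤ):ℝ) - 1 from hNm]
            push_cast
            have := unitL ((m:ℤ)+1)
            push_cast at this
            exact this
        have hcast : (((N+1:ℕ)):ℝ) = (N:ℝ)+1 := by push_cast; ring
        rw [hcast, ← hsplit, ih, hlast]
        push_cast
        ring
    have heqint : (∫ t in (0:ℝ)..1, |deriv (deriv g) ((n:ℝ)*t)| ^ p)
        = ∫ t in (0:ℝ)..1, φ ((n:ℝ)*t) := rfl
    rw [heqint]
    have h1 := intervalIntegral.integral_comp_mul_left (a := (0:ℝ)) (b := 1) φ hn0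
    rw [mul_zero, mul_one] at h1
    rw [h1, sumN n, smul_eq_mul, ← mul_assoc, inv_mul_cancel₀ hn0, one_mul]
    exact hnorm1
  · -- the zero count
    have hset : {t | t ∈ Ioo (0:ℝ) 1 ∧ fn t = 0}
        = ↑((Finset.Ioo 0 n).image (fun j : ℕ => (j:ℝ)/n)) := by
      ext t
      simp only [Finset.coe_image, mem_image, Finset.mem_coe, Finset.mem_Ioo, mem_setOf_eq]
      constructor
      · rintro ⟨⟨ht0, ht1⟩, hfz⟩
        obtain ⟨m, hm⟩ := (hzero_iff _).1 ((hfn0iff t).1 hfz)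
        have hmpos : 0 < m := by
          have : (0:ℝ) < m := by rw [← hm]; exact mul_pos hnpos ht0
          exact_mod_cast this
        have hmlt : m < (n:ℤ) := by
          have : (m:ℝ) < (n:ℝ) := by
            rw [← hm]
            nlinarith
          exact_mod_cast this
        refine ⟨m.toNat, ⟨?_, ?_⟩, ?_⟩
        · omega
        · omega
        · have hmt : ((m.toNat : ℕ) : ℝ) = (m:ℝ) := by
            have := Int.toNat_of_nonneg hmpos.le
            exact_mod_cast congrArg (Int.cast : ℤ → ℝ) this
          rw [hmt, ← hm, mul_comm, mul_div_assoc, div_self hn0, mul_one]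
      · rintro ⟨j, ⟨hj0, hjn⟩, rfl⟩
        have hjr : (0:ℝ) < j := by exact_mod_cast hj0
        have hjnr : (j:ℝ) < n := by exact_mod_cast hjn
        refine ⟨⟨div_pos hjr hnpos, (div_lt_one hnpos).mpr hjnr⟩, ?_⟩
        rw [hfn0iff]
        have : (n:ℝ) * ((j:ℝ)/n) = (j:ℝ) := by field_simp
        rw [this]
        have := hgint (j:ℤ); push_cast at this; exact this
    rw [hset, Set.encard_coe_eq_coe_finsetCard]
    rw [Finset.card_image_of_injOn]
    · rw [Nat.card_Ioo]
      norm_num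
    · intro a _ b _ hab
      have : (a:ℝ) = b := by
        field_simp at hab
        exact_mod_cast hab
      exact_mod_cast this
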